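/- Let X, Y be normed spaces, E ⊆ X a convex set with nonempty interior, and P : X → Y a continuous linear open map. Then P(int E) = int P(E). -/

import Mathlib

theorem stmt_3 {X Y : Type*} [NormedAddCommGroup X] [NormedSpace ℝ X]
    [NormedAddCommGroup Y] [NormedSpace ℝ Y]
    (E : Set X) (hE : Convex ℝ E) (hint : (interior E).Nonempty)
    (P : X →L[ℝ] Y) (hP : IsOpenMap P) :
    P '' interior E = interior (P '' E) := by
  apply Set.Subset.antisymm
  · -- P '' interior E is open and ⊆ P '' E
    apply interior_maximal (Set.image_mono interior_subset)
      (hP _ isOpen_interior)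
  · rintro y hy
    obtain ⟨x₀, hx₀⟩ := hint
    obtain ⟨ε, hε, hball⟩ := Metric.isOpen_iff.1 isOpen_interior y hy
    set t : ℝ := min (1/2) (ε / (2 * (‖y - P x₀‖ + 1))) with ht
    have hden : (0:ℝ) < 2 * (‖y - P x₀‖ + 1) := by positivity
    have htpos : 0 < t := lt_min (by norm_num) (by positivity)
    have hz : y + t • (y - P x₀) ∈ P '' E := by
      apply interior_subset
      apply hball
      rw [Metric.mem_ball, dist_eq_norm]
      have : y + t • (y - P x₀) - y = t • (y - P x₀) := by abel
      rw [this, norm_smul, Real.norm_eq_abs, abs_of_pos htpos]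
      calc t * ‖y - P x₀‖ ≤ (ε / (2 * (‖y - P x₀‖ + 1))) * ‖y - P x₀‖ := by
            apply mul_le_mul_of_nonneg_right (min_le_right _ _) (norm_nonneg _)
        _ < ε := by
            rw [div_mul_eq_mul_div, div_lt_iff₀ hden]
            have h1 : ‖y - P x₀‖ < ‖y - P x₀‖ + 1 := by linarith
            calc ε * ‖y - P x₀‖ ≤ ε * (‖y - P x₀‖ + 1) := by nlinarith [norm_nonneg (y - P x₀)]
              _ < ε * (2 * (‖y - P x₀‖ + 1)) := by nlinarith
    obtain ⟨xz, hxz, hxzeq⟩ := hz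
    have h1t : (0:ℝ) < 1 + t := by linarith
    set a : ℝ := t / (1 + t) with ha
    have hapos : 0 < a := div_pos htpos h1t
    have hb : (0:ℝ) ≤ 1 - a := by
      rw [sub_nonneg, ha, div_le_one h1t]; linarith
    refine ⟨a • x₀ + (1 - a) • xz,
      hE.combo_interior_self_mem_interior hx₀ hxz hapos hb (by ring), ?_⟩
    rw [map_add, map_smul, map_smul, hxzeq, ha]
    have hane : (1 + t) ≠ 0 := ne_of_gt h1t
    match_scalars <;> field_simp <;> ring
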